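/- Let G be a finite simple graph on n vertices, n ≥ 2, and let k ≥ 3 be an integer. If every cycle of G has length strictly greater than 2⌈log_{k−1} n⌉, then the chromatic number of G satisfies χ(G) ≤ k. -/

import Mathlib

open SimpleGraph Walk

variable {V : Type} {G : SimpleGraph V}

/-- A walk-loop that is a path is nil. -/
lemma path_loop_eq_nil [DecidableEq V] {u : V} (p : G.Walk u u) (hp : p.IsPath) : p = Walk.nil := by
  have := SimpleGraph.Path.loop_eq (⟨p, hp⟩ : G.Path u u)
  simpa using congrArg Subtype.val this

/-- Meet lemma: given a path `p : a → w` and a path `q : u → w` with `u ∉ p.support`,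
there exist initial segments `r : a → x` (inside `p`) and `s : u → x` (inside `q`)
meeting only at `x`. -/
lemma meet_lemma [DecidableEq V] {a w u : V} (p : G.Walk a w) :
    ∀ (q : G.Walk u w), p.IsPath → q.IsPath → u ∉ p.support →
    ∃ (x : V) (r : G.Walk a x) (s : G.Walk u x),
      r.IsPath ∧ s.IsPath ∧ r.length ≤ p.length ∧ s.length ≤ q.length ∧
      (∀ y ∈ r.support, y ∈ s.support → y = x) ∧
      (∀ y ∈ r.support, y ∈ p.support) ∧ (∀ y ∈ s.support, y ∈ q.support) ∧
      (∀ e ∈ s.edges, e ∈ q.edges) := by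
  induction p with
  | nil =>
    rename_i b
    intro q hp hq hu
    refine ⟨b, Walk.nil, q.takeUntil b q.end_mem_support, ?_, hq.takeUntil _,
      le_refl _, q.length_takeUntil_le _, ?_, ?_, ?_, ?_⟩
    · exact IsPath.nil
    · intro y hy _; simpa using hy
    · intro y hy; simpa using hy
    · intro y hy; exact q.support_takeUntil_subset _ hy
    · intro e he; exact q.edges_takeUntil_subset _ he
  | cons h p' ih =>
    rename_i a c _
    intro q hp hq hu
    by_cases ha : a ∈ q.support
    · refine ⟨a, Walk.nil, q.takeUntil a ha, IsPath.nil, hq.takeUntil _,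
        Nat.zero_le _, q.length_takeUntil_le _, ?_, ?_, ?_, ?_⟩
      · intro y hy _; simpa using hy
      · intro y hy; simp at hy; simp [hy]
      · intro y hy; exact q.support_takeUntil_subset _ hy
      · intro e he; exact q.edges_takeUntil_subset _ he
    · have hp' : p'.IsPath := hp.of_cons
      have hanp : a ∉ p'.support := (Walk.cons_isPath_iff _ _).mp hp |>.2
      have hu' : u ∉ p'.support := fun hmem => hu (by simp [hmem])
      obtain ⟨x, r', s, hr', hs, hlr, hls, hmeet, hrsub, hssub, hesub⟩ := ih q hp' hq hu'
      refine ⟨x, Walk.cons h r', s, ?_, hs, ?_, hls, ?_, ?_, hssub, hesub⟩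
      · rw [Walk.cons_isPath_iff]
        exact ⟨hr', fun hmem => hanp (hrsub _ hmem)⟩
      · simpa using Nat.succ_le_succ hlr
      · intro y hy hys
        rcases (by simpa using hy : y = a ∨ y ∈ r'.support) with rfl | hy'
        · exact absurd (hssub _ hys) ha
        · exact hmeet _ hy' hys
      · intro y hy
        rcases (by simpa using hy : y = a ∨ y ∈ r'.support) with rfl | hy'
        · simp
        · simp [hrsub _ hy']

/-- Two distinct paths between the same endpoints give a cycle of length at most
the sum of their lengths. -/
lemma cycle_of_two_paths [DecidableEq V] :
    ∀ (n : ℕ) {u w : V} (p q : G.Walk u w), p.length ≤ n → p.IsPath → q.IsPath → p ≠ q →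
    ∃ (x : V) (c : G.Walk x x), c.IsCycle ∧ c.length ≤ p.length + q.length := by
  intro n
  induction n with
  | zero =>
    intro u w p q hlen hp hq hne
    cases p with
    | nil => exact absurd (path_loop_eq_nil q hq).symm hne
    | cons h p' => simp at hlen
  | succ n ihn =>
    intro u w p q hlen hp hq hne
    cases p with
    | nil => exact absurd (path_loop_eq_nil q hq).symm hne
    | cons h p' =>
      rename_i a
      cases q with
      | nil =>
        exact absurd (path_loop_eq_nil _ hp) (by simp)
      | cons h' q' =>
        rename_i b
        by_cases hab : a = b
        · subst hab
          have hne' : p' ≠ q' := by rintro rfl; exact hne rfl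
          obtain ⟨x, c, hc, hlc⟩ := ihn p' q' (by simpa using hlen) hp.of_cons hq.of_cons hne'
          exact ⟨x, c, hc, by simp only [Walk.length_cons]; omega⟩
        · -- the two paths diverge immediately; find the meeting point
          have hp' : p'.IsPath := hp.of_cons
          have hu : u ∉ p'.support := (Walk.cons_isPath_iff _ _).mp hp |>.2
          have huq' : u ∉ q'.support := (Walk.cons_isPath_iff _ _).mp hq |>.2
          obtain ⟨x, r, s, hr, hs, hlr, hls, hmeet, hrsub, hssub, hesub⟩ :=
            meet_lemma p' (Walk.cons h' q') hp' hq hu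
          refine ⟨u, Walk.cons h (r.append s.reverse), ?_, ?_⟩
          · rw [Walk.cons_isCycle_iff]
            constructor
            · -- the appended walk is a path
              rw [Walk.isPath_def, Walk.support_append]
              refine List.Nodup.append hr.support_nodup ?_ ?_
              · have : s.reverse.IsPath := hs.reverse
                exact List.Nodup.sublist (List.tail_sublist _) this.support_nodup
              · intro y hyr hyt
                have hys : y ∈ s.support := by
                  have := List.mem_of_mem_tail hyt
                  rw [Walk.support_reverse] at this
                  simpa using this
                have hyx : y = x := hmeet y hyr hys
                subst hyx
                -- but x is the head of s.reverse.support, not in its tail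
                have hnd : s.reverse.support.Nodup := hs.reverse.support_nodup
                rw [Walk.support_eq_cons] at hnd
                exact (List.nodup_cons.mp hnd).1 hyt
            · -- the edge s(u,a) is not among the path's edges
              rw [Walk.edges_append]
              intro hmem
              rcases List.mem_append.mp hmem with hmem | hmem
              · exact hu (hrsub _ (r.fst_mem_support_of_mem_edges hmem))
              · rw [Walk.edges_reverse, List.mem_reverse] at hmem
                have := hesub _ hmem
                rw [Walk.edges_cons] at this
                rcases List.mem_cons.mp this with heq | hmem'
                · rw [Sym2.eq_iff] at heq
                  rcases heq with ⟨_, rfl⟩ | ⟨rfl, rfl⟩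
                  · exact hab rfl
                  · exact hab rfl
                · exact huq' (q'.fst_mem_support_of_mem_edges hmem')
          · have h1 : s.length ≤ q'.length + 1 := by simpa using hls
            simp only [Walk.length_cons, Walk.length_append, Walk.length_reverse]
            omega

/-- In a path ending at `w`, at most one edge is incident to `w`. -/
lemma eq_of_edges_at_end [DecidableEq V] {v w : V} (p : G.Walk v w) (hp : p.IsPath) :
    ∀ y₁ y₂ : V, s(y₁, w) ∈ p.edges → s(y₂, w) ∈ p.edges → y₁ = y₂ := by
  induction p with
  | nil => intro y₁ y₂ h1; simp at h1
  | cons h p' ih =>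
    rename_i v c w'
    intro y₁ y₂ h1 h2
    have hp' : p'.IsPath := hp.of_cons
    have hv : v ∉ p'.support := (Walk.cons_isPath_iff _ _).mp hp |>.2
    have hvw : v ≠ w' := by
      rintro rfl
      have := path_loop_eq_nil _ hp
      simp at this
    rw [Walk.edges_cons] at h1 h2
    have key : ∀ y : V, s(y, w') = s(v, c) → y = v ∧ w' = c := by
      intro y hy
      rw [Sym2.eq_iff] at hy
      rcases hy with ⟨h1, h2⟩ | ⟨h1, h2⟩
      · exact ⟨h1, h2⟩
      · exact absurd h2.symm hvw
    rcases List.mem_cons.mp h1 with ha | ha <;> rcases List.mem_cons.mp h2 with hb | hb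
    · rw [(key _ ha).1, (key _ hb).1]
    · obtain ⟨rfl, rfl⟩ := key _ ha
      have hnil : p' = Walk.nil := path_loop_eq_nil _ hp'
      rw [hnil] at hb; simp at hb
    · obtain ⟨rfl, rfl⟩ := key _ hb
      have hnil : p' = Walk.nil := path_loop_eq_nil _ hp'
      rw [hnil] at ha; simp at ha
    · exact ih hp' y₁ y₂ ha hb

/-- If `y` is on a path `p : v → w`, `w` is adjacent to `y`, and the edge `{w,y}` is not
an edge of `p`, then there is a cycle of length at most `p.length + 1`. -/
lemma cycle_of_neighbor_on_path [DecidableEq V] {v w y : V} (p : G.Walk v w) (hp : p.IsPath)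
    (hy : y ∈ p.support) (hadj : G.Adj w y) (he : s(w, y) ∉ p.edges) :
    ∃ (x : V) (c : G.Walk x x), c.IsCycle ∧ c.length ≤ p.length + 1 := by
  have hd : (p.dropUntil y hy).IsPath := hp.dropUntil hy
  refine ⟨y, Walk.cons hadj.symm (p.dropUntil y hy).reverse, ?_, ?_⟩
  · rw [Walk.cons_isCycle_iff]
    refine ⟨hd.reverse, ?_⟩
    rw [Walk.edges_reverse, List.mem_reverse]
    intro hmem
    exact he (by rw [Sym2.eq_swap] at hmem ⊢; exact p.edges_dropUntil_subset hy (by rwa [Sym2.eq_swap] at hmem))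
  · rw [Walk.length_cons, Walk.length_reverse]
    have := p.length_dropUntil_le hy
    omega

/-- If every nonempty subset of `S` contains a vertex with fewer than `k` neighbors in it,
then the graph induced on `S` is `k`-colorable (as a coloring of all of `V`). -/
lemma colorable_of_degenerate [Fintype V] [DecidableEq V] [DecidableRel G.Adj] (k : ℕ) (hk : 0 < k) :
    ∀ S : Finset V,
      (∀ T : Finset V, T ⊆ S → T.Nonempty → ∃ v ∈ T, (G.neighborFinset v ∩ T).card < k) →
      ∃ C : V → Fin k, ∀ u ∈ S, ∀ v ∈ S, G.Adj u v → C u ≠ C v := by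
  intro S
  induction S using Finset.strongInduction with
  | _ S ih =>
    intro hyp
    rcases S.eq_empty_or_nonempty with rfl | hne
    · exact ⟨fun _ => ⟨0, hk⟩, by simp⟩
    · obtain ⟨v, hv, hdeg⟩ := hyp S (le_refl _) hne
      have hss : S.erase v ⊂ S := Finset.erase_ssubset hv
      obtain ⟨C, hC⟩ := ih (S.erase v) hss
        (fun T hT hTne => hyp T (hT.trans hss.subset) hTne)
      set B : Finset (Fin k) := (G.neighborFinset v ∩ S.erase v).image C with hB
      have hBcard : B.card < k := by
        calc B.card ≤ (G.neighborFinset v ∩ S.erase v).card := Finset.card_image_le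
          _ ≤ (G.neighborFinset v ∩ S).card :=
            Finset.card_le_card (Finset.inter_subset_inter (le_refl _) (S.erase_subset v))
          _ < k := hdeg
      have hcompl : Bᶜ.Nonempty := by
        rw [← Finset.card_pos, Finset.card_compl, Fintype.card_fin]
        omega
      obtain ⟨c, hc⟩ := hcompl
      rw [Finset.mem_compl] at hc
      refine ⟨Function.update C v c, ?_⟩
      intro u₁ hu₁ u₂ hu₂ hadj
      by_cases h1 : u₁ = v <;> by_cases h2 : u₂ = v
      · subst h1; subst h2; exact absurd hadj (G.loopless.irrefl _)
      · subst h1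
        rw [Function.update_self, Function.update_of_ne h2]
        intro heq
        apply hc
        rw [hB, heq]
        exact Finset.mem_image_of_mem C
          (Finset.mem_inter.mpr ⟨(G.mem_neighborFinset _ _).mpr hadj, Finset.mem_erase.mpr ⟨h2, hu₂⟩⟩)
      · subst h2
        rw [Function.update_self, Function.update_of_ne h1]
        intro heq
        apply hc
        rw [hB, ← heq]
        exact Finset.mem_image_of_mem C
          (Finset.mem_inter.mpr ⟨(G.mem_neighborFinset _ _).mpr hadj.symm,
            Finset.mem_erase.mpr ⟨h1, hu₁⟩⟩)
      · rw [Function.update_of_ne h1, Function.update_of_ne h2]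
        exact hC u₁ (Finset.mem_erase.mpr ⟨h1, hu₁⟩) u₂ (Finset.mem_erase.mpr ⟨h2, hu₂⟩) hadj

lemma counting_lemma [Fintype V] [DecidableEq V] [DecidableRel G.Adj]
    (S : Finset V) (k : ℕ) (hk : 3 ≤ k)
    (hdeg : ∀ v ∈ S, k ≤ (G.neighborFinset v ∩ S).card) (hSne : S.Nonempty)
    (r : ℕ) (hr : 1 ≤ r)
    (hcyc : ∀ (x : V) (c : G.Walk x x), c.IsCycle → 2 * r < c.length) :
    (k - 1) ^ (r - 1) * k ≤ Fintype.card V := by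
  obtain ⟨v₀, hv₀⟩ := hSne
  -- the collections of paths from v₀ of length i staying inside S
  let P : ∀ (i : ℕ) (w : V), Finset (G.Walk v₀ w) := fun i w =>
    (G.finsetWalkLength i v₀ w).filter (fun p => p.IsPath ∧ ∀ y ∈ p.support, y ∈ S)
  have hPmem : ∀ {i w} {p : G.Walk v₀ w},
      p ∈ P i w ↔ p.length = i ∧ p.IsPath ∧ ∀ y ∈ p.support, y ∈ S := by
    intro i w p
    simp only [P, Finset.mem_filter, SimpleGraph.mem_finsetWalkLength_iff, and_assoc]
  let f : ℕ → ℕ := fun i => ∑ w : V, (P i w).card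
  -- the extension step
  have hstep : ∀ (i m : ℕ),
      (∀ (w : V) (p : G.Walk v₀ w), p ∈ P i w →
        m ≤ ((G.neighborFinset w ∩ S).filter (fun y => y ∉ p.support)).card) →
      m * f i ≤ f (i + 1) := by
    intro i m hgood
    classical
    let A : Finset ((w : V) × G.Walk v₀ w) := Finset.univ.sigma (fun w => P i w)
    let A' : Finset ((w : V) × G.Walk v₀ w) := Finset.univ.sigma (fun w => P (i + 1) w)
    let good : ((w : V) × G.Walk v₀ w) → Finset V := fun z =>
      (G.neighborFinset z.1 ∩ S).filter (fun y => y ∉ z.2.support)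
    let D : Finset ((_ : (w : V) × G.Walk v₀ w) × V) := A.sigma (fun z => good z)
    have hAf : A.card = f i := Finset.card_sigma _ _
    have hA'f : A'.card = f (i + 1) := Finset.card_sigma _ _
    have hcardD : m * f i ≤ D.card := by
      calc m * f i = ∑ _z ∈ A, m := by
            rw [Finset.sum_const, smul_eq_mul, mul_comm, hAf]
        _ ≤ ∑ z ∈ A, (good z).card := by
            refine Finset.sum_le_sum ?_
            intro z hz
            rw [Finset.mem_sigma] at hz
            exact hgood z.1 z.2 hz.2
        _ = D.card := (Finset.card_sigma _ _).symm
    have hinj : ∀ t ∈ D, ∀ t' ∈ D,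
        (fun (t : (_ : (w : V) × G.Walk v₀ w) × V) =>
          if h : G.Adj t.1.1 t.2 then (⟨t.2, t.1.2.concat h⟩ : (w : V) × G.Walk v₀ w)
          else ⟨v₀, Walk.nil⟩) t =
        (fun (t : (_ : (w : V) × G.Walk v₀ w) × V) =>
          if h : G.Adj t.1.1 t.2 then (⟨t.2, t.1.2.concat h⟩ : (w : V) × G.Walk v₀ w)
          else ⟨v₀, Walk.nil⟩) t' → t = t' := by
      rintro ⟨⟨w₁, p₁⟩, y₁⟩ ht ⟨⟨w₂, p₂⟩, y₂⟩ ht' heq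
      rw [Finset.mem_sigma] at ht ht'
      obtain ⟨_, hy₁⟩ := ht
      obtain ⟨_, hy₂⟩ := ht'
      have hadj₁ : G.Adj w₁ y₁ := by
        have := (Finset.mem_filter.mp hy₁).1
        exact (G.mem_neighborFinset _ _).mp (Finset.mem_inter.mp this).1
      have hadj₂ : G.Adj w₂ y₂ := by
        have := (Finset.mem_filter.mp hy₂).1
        exact (G.mem_neighborFinset _ _).mp (Finset.mem_inter.mp this).1
      simp only [dif_pos hadj₁, dif_pos hadj₂] at heq
      obtain ⟨rfl, hw⟩ := Sigma.mk.inj_iff.mp heq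
      have hconcat : p₁.concat hadj₁ = p₂.concat hadj₂ := eq_of_heq hw
      obtain ⟨rfl, hp⟩ := Walk.concat_inj hconcat
      rw [Walk.copy_rfl_rfl] at hp
      subst hp
      rfl
    have hmaps : ∀ t ∈ D,
        (fun (t : (_ : (w : V) × G.Walk v₀ w) × V) =>
          if h : G.Adj t.1.1 t.2 then (⟨t.2, t.1.2.concat h⟩ : (w : V) × G.Walk v₀ w)
          else ⟨v₀, Walk.nil⟩) t ∈ A' := by
      rintro ⟨⟨w, p⟩, y⟩ ht
      rw [Finset.mem_sigma] at ht
      obtain ⟨hA, hy⟩ := ht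
      rw [Finset.mem_sigma] at hA
      have hp := hPmem.mp hA.2
      obtain ⟨hyn, hyns⟩ := Finset.mem_filter.mp hy
      have hadj : G.Adj w y := (G.mem_neighborFinset _ _).mp (Finset.mem_inter.mp hyn).1
      have hyS : y ∈ S := (Finset.mem_inter.mp hyn).2
      simp only [dif_pos hadj]
      rw [Finset.mem_sigma]
      refine ⟨Finset.mem_univ _, hPmem.mpr ⟨?_, ?_, ?_⟩⟩
      · rw [Walk.length_concat, hp.1]
      · rw [Walk.isPath_def, Walk.support_concat]
        rw [List.nodup_append]
        exact ⟨hp.2.1.support_nodup, List.nodup_singleton _,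
          by intro a ha b hb hab; rw [List.mem_singleton] at hb; subst hb; subst hab; exact hyns ha⟩
      · intro z hz
        rw [Walk.support_concat, List.mem_append] at hz
        rcases hz with hz | hz
        · exact hp.2.2 _ hz
        · rw [List.mem_singleton] at hz; subst hz; exact hyS
    have hDA' : D.card ≤ A'.card := Finset.card_le_card_of_injOn _ hmaps hinj
    omega
  -- at most one neighbor of the endpoint lies on the path
  have hbound : ∀ (i : ℕ), i + 1 ≤ r → ∀ (w : V) (p : G.Walk v₀ w), p ∈ P i w →
      k - 1 ≤ ((G.neighborFinset w ∩ S).filter (fun y => y ∉ p.support)).card := by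
    intro i hi w p hp
    obtain ⟨hlen, hpath, hsub⟩ := hPmem.mp hp
    have hwS : w ∈ S := hsub _ p.end_mem_support
    have hk' : k ≤ (G.neighborFinset w ∩ S).card := hdeg w hwS
    have hsplit := Finset.card_filter_add_card_filter_not
      (s := G.neighborFinset w ∩ S) (p := fun y => y ∈ p.support)
    have hbad : ((G.neighborFinset w ∩ S).filter (fun y => y ∈ p.support)).card ≤ 1 := by
      rw [Finset.card_le_one]
      intro y₁ h₁ y₂ h₂
      have key : ∀ y, y ∈ (G.neighborFinset w ∩ S).filter (fun y => y ∈ p.support) →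
          s(y, w) ∈ p.edges := by
        intro y hy
        obtain ⟨hyn, hysupp⟩ := Finset.mem_filter.mp hy
        have hadj : G.Adj w y := (G.mem_neighborFinset _ _).mp (Finset.mem_inter.mp hyn).1
        by_contra hne
        obtain ⟨x, c, hc, hlc⟩ := cycle_of_neighbor_on_path p hpath hysupp hadj
          (by rwa [Sym2.eq_swap] at hne)
        have := hcyc x c hc
        omega
      exact eq_of_edges_at_end p hpath y₁ y₂ (key _ h₁) (key _ h₂)
    omega
  -- the first step gives a factor of k
  have hzero : ∀ (w : V) (p : G.Walk v₀ w), p ∈ P 0 w →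
      k ≤ ((G.neighborFinset w ∩ S).filter (fun y => y ∉ p.support)).card := by
    intro w p hp
    obtain ⟨hlen, hpath, hsub⟩ := hPmem.mp hp
    cases p with
    | nil =>
      have heq : (G.neighborFinset v₀ ∩ S).filter
          (fun y => y ∉ (Walk.nil : G.Walk v₀ v₀).support) = G.neighborFinset v₀ ∩ S := by
        apply Finset.filter_true_of_mem
        intro y hy
        simp only [Walk.support_nil, List.mem_singleton]
        rintro rfl
        exact G.loopless.irrefl y ((G.mem_neighborFinset _ _).mp (Finset.mem_inter.mp hy).1)
      rw [heq]
      exact hdeg _ hv₀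
    | cons h q => simp at hlen
  have hf0 : 1 ≤ f 0 := by
    have hmem : (Walk.nil : G.Walk v₀ v₀) ∈ P 0 v₀ :=
      hPmem.mpr ⟨rfl, Walk.IsPath.nil, by simpa using hv₀⟩
    calc 1 ≤ (P 0 v₀).card := Finset.card_pos.mpr ⟨_, hmem⟩
      _ ≤ f 0 :=
        Finset.single_le_sum (f := fun w => (P 0 w).card) (fun _ _ => Nat.zero_le _)
          (Finset.mem_univ v₀)
  have hchain : ∀ j, j + 1 ≤ r → (k - 1) ^ j * k ≤ f (j + 1) := by
    intro j
    induction j with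
    | zero =>
      intro _
      calc (k - 1) ^ 0 * k = k * 1 := by ring
        _ ≤ k * f 0 := Nat.mul_le_mul_left _ hf0
        _ ≤ f 1 := hstep 0 k hzero
    | succ j ih =>
      intro hj
      have h1 := ih (by omega)
      have h2 := hstep (j + 1) (k - 1) (hbound (j + 1) (by omega))
      calc (k - 1) ^ (j + 1) * k = (k - 1) * ((k - 1) ^ j * k) := by ring
        _ ≤ (k - 1) * f (j + 1) := Nat.mul_le_mul_left _ h1
        _ ≤ f (j + 1 + 1) := h2
  have hcard : f r ≤ Fintype.card V := by
    have hone : ∀ w : V, (P r w).card ≤ 1 := by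
      intro w
      rw [Finset.card_le_one]
      intro p hp q hq
      by_contra hne
      obtain ⟨hlp, hpp, _⟩ := hPmem.mp hp
      obtain ⟨hlq, hpq, _⟩ := hPmem.mp hq
      obtain ⟨x, c, hc, hlc⟩ := cycle_of_two_paths p.length p q (le_refl _) hpp hpq hne
      have := hcyc x c hc
      omega
    calc f r = ∑ w : V, (P r w).card := rfl
      _ ≤ ∑ _w : V, 1 := Finset.sum_le_sum (fun w _ => hone w)
      _ = Fintype.card V := by simp
  have hfinal : (k - 1) ^ (r - 1) * k ≤ f r := by
    have h1 := hchain (r - 1) (by omega)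
    have hrr : r - 1 + 1 = r := by omega
    rwa [hrr] at h1
  omega

/-- If every cycle of a finite simple graph `G` on `n ≥ 2` vertices has length
strictly greater than `2⌈log_{k-1} n⌉` (where `k ≥ 3`), then `χ(G) ≤ k`. -/
theorem chromaticNumber_le_of_no_short_cycles {V : Type} [Fintype V]
    (G : SimpleGraph V) (k : ℕ) (hk : 3 ≤ k) (hn : 2 ≤ Fintype.card V)
    (hcyc : ∀ (v : V) (c : G.Walk v v), c.IsCycle →
      2 * Nat.clog (k - 1) (Fintype.card V) < c.length) :
    G.chromaticNumber ≤ (k : ℕ∞) := by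
  classical
  rw [SimpleGraph.chromaticNumber_le_iff_colorable]
  by_contra hcol
  set n := Fintype.card V with hndef
  set r := Nat.clog (k - 1) n with hrdef
  have hr1 : 1 ≤ r := Nat.clog_pos (by omega) (by omega)
  -- extract a subset of minimum degree at least k
  have hdeg : ∃ S : Finset V, S.Nonempty ∧ ∀ v ∈ S, k ≤ (G.neighborFinset v ∩ S).card := by
    by_contra hno
    push_neg at hno
    apply hcol
    obtain ⟨C, hC⟩ := colorable_of_degenerate (G := G) k (by omega) Finset.univ
      (fun T _ hTne => hno T hTne)
    exact ⟨SimpleGraph.Coloring.mk C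
      (fun hadj => hC _ (Finset.mem_univ _) _ (Finset.mem_univ _) hadj)⟩
  obtain ⟨S, hSne, hS⟩ := hdeg
  have hcount := counting_lemma (G := G) S k hk hS hSne r hr1 (fun x c hc => hcyc x c hc)
  have hpow : n ≤ (k - 1) ^ r := Nat.le_pow_clog (by omega) n
  have hsucc : (k - 1) ^ (r - 1) * (k - 1) = (k - 1) ^ r := by
    rw [← pow_succ]
    congr 1
    omega
  have ha : 1 ≤ (k - 1) ^ (r - 1) := Nat.one_le_pow _ _ (by omega)
  have hksplit : (k - 1) + 1 = k := by omega
  have hmul := Nat.mul_succ ((k - 1) ^ (r - 1)) (k - 1)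
  rw [Nat.succ_eq_add_one, hksplit, hsucc] at hmul
  omega
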